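/- arXiv:1609.05009 — 4 statements merged into one kernel-verified Lean document; each statement's English description precedes it below -/
import Mathlib

section
/- Fix complex numbers f, h, b with f ≠ 0, and real numbers N0 > 0 and σ. Define Φ : ℂ → ℝ by Φ(w) = 2·Re(conj(f)·(w·h − σ·b)) − (|f·w|²·(N0+|h|²) + σ·|f·b|² − 2σ·|f|²·Re(h·w·conj(b)))/(1+|f|²). Then for every w ∈ ℂ, Φ(w) ≤ Φ(w★), where w★ = conj(h)·(1+|f|² + σ·conj(f)·b)/(conj(f)·(N0+|h|²)); i.e., w★ is a global maximizer of Φ over ℂ. -/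
open Complex Real

/-- The part of the MILB integrand (at a fixed frequency) that depends on the
prefilter value `w`. -/
noncomputable def Phi (f h b : ℂ) (N0 σ : ℝ) (w : ℂ) : ℝ :=
  2 * ((starRingEnd ℂ) f * (w * h - (σ : ℂ) * b)).re -
    (‖f * w‖ ^ 2 * (N0 + ‖h‖ ^ 2) +
      σ * ‖f * b‖ ^ 2 -
      2 * σ * ‖f‖ ^ 2 * (h * w * (starRingEnd ℂ) b).re) /
    (1 + ‖f‖ ^ 2)

/-- Quadratic maximization: `2 Re(L w) - A |w|²` is maximized at `w = conj L / A`. -/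
lemma quad_max (A : ℝ) (hA : 0 < A) (L w : ℂ) :
    2*(L*w).re - A * Complex.normSq w ≤
    2*(L*((starRingEnd ℂ) L * ((A⁻¹:ℝ):ℂ))).re - A * Complex.normSq ((starRingEnd ℂ) L * ((A⁻¹:ℝ):ℂ)) := by
  have hA' : A ≠ 0 := ne_of_gt hA
  have key : (2*(L*((starRingEnd ℂ) L * ((A⁻¹:ℝ):ℂ))).re - A * Complex.normSq ((starRingEnd ℂ) L * ((A⁻¹:ℝ):ℂ)))
      - (2*(L*w).re - A * Complex.normSq w)
      = ((A*w.re - L.re)^2 + (A*w.im + L.im)^2)/A := by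
    simp only [Complex.normSq_apply, Complex.mul_re, Complex.mul_im,
      Complex.conj_re, Complex.conj_im, Complex.ofReal_re, Complex.ofReal_im]
    field_simp
    ring
  nlinarith [div_nonneg (by positivity : (0:ℝ) ≤ (A*w.re - L.re)^2 + (A*w.im + L.im)^2) hA.le]

/-- `Phi` in canonical quadratic form. -/
lemma Phi_eq (f h b : ℂ) (N0 σ : ℝ) (w : ℂ) :
    Phi f h b N0 σ w =
      2*(((starRingEnd ℂ) f * h + ((σ * ‖f‖^2 / (1 + ‖f‖^2) : ℝ):ℂ) * (h * (starRingEnd ℂ) b))*w).re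
      - (‖f‖^2 * (N0 + ‖h‖^2)/(1 + ‖f‖^2)) * Complex.normSq w
      - (2*σ*((starRingEnd ℂ) f * b).re + σ * ‖f*b‖^2 / (1 + ‖f‖^2)) := by
  have hD : (0:ℝ) < 1 + ‖f‖^2 := by positivity
  unfold Phi
  simp only [Complex.sq_norm, Complex.normSq_apply, Complex.mul_re, Complex.mul_im,
    Complex.sub_re, Complex.sub_im, Complex.add_re, Complex.add_im,
    Complex.conj_re, Complex.conj_im, Complex.ofReal_re, Complex.ofReal_im]
  field_simp
  ring

/-- The stated optimizer equals `conj L * A⁻¹`. -/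
lemma wstar_eq (f h b : ℂ) (hf : f ≠ 0) (N0 σ : ℝ) (hN0 : 0 < N0) :
    (starRingEnd ℂ) h * (1 + (‖f‖ ^ 2 : ℂ) + (σ : ℂ) * (starRingEnd ℂ) f * b) /
      ((starRingEnd ℂ) f * ((N0 : ℂ) + (‖h‖ ^ 2 : ℂ)))
    = (starRingEnd ℂ) ((starRingEnd ℂ) f * h + ((σ * ‖f‖^2 / (1 + ‖f‖^2) : ℝ):ℂ) * (h * (starRingEnd ℂ) b))
      * ((((‖f‖^2 * (N0 + ‖h‖^2)/(1 + ‖f‖^2))⁻¹ : ℝ)):ℂ) := by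
  have hD : (1:ℝ) + ‖f‖^2 ≠ 0 := by positivity
  have hNh : N0 + ‖h‖^2 ≠ 0 := by positivity
  have hcf : (starRingEnd ℂ) f ≠ 0 := by simpa using hf
  have hNhc : ((N0:ℂ) + ((‖h‖ : ℂ))^2) ≠ 0 := by
    have : ((N0:ℂ) + ((‖h‖ : ℂ))^2) = ((N0 + ‖h‖^2 : ℝ) : ℂ) := by push_cast; ring
    rw [this]; exact_mod_cast hNh
  have hmc : (((‖f‖ : ℂ))^2) = f * (starRingEnd ℂ) f := by
    rw [Complex.mul_conj]; rw [show (Complex.normSq f : ℝ) = ‖f‖ ^2 from (Complex.sq_norm f).symm]; push_cast; ring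
  have hDc : (1:ℂ) + f * (starRingEnd ℂ) f ≠ 0 := by
    rw [← hmc]
    have : ((1:ℂ) + ((‖f‖:ℂ))^2) = ((1 + ‖f‖^2 : ℝ):ℂ) := by push_cast; ring
    rw [this]; exact_mod_cast hD
  simp only [map_add, map_mul, Complex.conj_conj, Complex.conj_ofReal]
  push_cast
  rw [hmc]
  field_simp

/-- The optimal prefilter value `w★` is a global maximizer of `Φ` over `ℂ`. -/
theorem stmt0 (f h b : ℂ) (hf : f ≠ 0) (N0 σ : ℝ) (hN0 : 0 < N0) :
    ∀ w : ℂ,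
      Phi f h b N0 σ w ≤
        Phi f h b N0 σ
          ((starRingEnd ℂ) h * (1 + (‖f‖ ^ 2 : ℂ) + (σ : ℂ) * (starRingEnd ℂ) f * b) /
            ((starRingEnd ℂ) f * ((N0 : ℂ) + (‖h‖ ^ 2 : ℂ)))) := by
  intro w
  have hfa : ‖f‖ ≠ 0 := by simpa using hf
  have hA : 0 < ‖f‖^2 * (N0 + ‖h‖^2)/(1 + ‖f‖^2) := by positivity
  rw [Phi_eq, Phi_eq, wstar_eq f h b hf N0 σ hN0]
  have := quad_max _ hA
    ((starRingEnd ℂ) f * h + ((σ * ‖f‖^2 / (1 + ‖f‖^2) : ℝ):ℂ) * (h * (starRingEnd ℂ) b)) w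
  linarith
end

section
/- Fix complex numbers f, h, b with f ≠ 0, and reals N0 > 0 and σ. Let m = −N0/(N0+|h|²), m̃ = σ²·(1+m) − σ, and w★ = conj(h)·(1+|f|² + σ·conj(f)·b)/(conj(f)·(N0+|h|²)). Then the following identity holds: log(1+|f|²) − |f|² − (|f·w★|²·(N0+|h|²) + σ·|f·b|² − 2σ·|f|²·Re(h·w★·conj(b)))/(1+|f|²) + 2·Re(conj(f)·(w★·h − σ·b)) = 1 + log(1+|f|²) + m·(1+|f|²) + m̃·|f·b|²/(1+|f|²) + 2σ·m·Re(conj(f)·b). -/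
open Complex Real

set_option maxHeartbeats 16000000
set_option linter.all false

/-- Per-frequency substitution of the optimal prefilter `w★` into the MILB integrand
(equation (A.2) of the paper, at a fixed frequency). -/
theorem stmt2 (f h b : ℂ) (hf : f ≠ 0) (N0 σ : ℝ) (hN0 : 0 < N0) :
    let m : ℝ := -N0 / (N0 + ‖h‖ ^ 2)
    let mt : ℝ := σ ^ 2 * (1 + m) - σ
    let wstar : ℂ :=
      (starRingEnd ℂ) h * (1 + (‖f‖ ^ 2 : ℂ) + (σ : ℂ) * (starRingEnd ℂ) f * b) /
        ((starRingEnd ℂ) f * ((N0 : ℂ) + (‖h‖ ^ 2 : ℂ)))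
    Real.log (1 + ‖f‖ ^ 2) - ‖f‖ ^ 2 -
        (‖f * wstar‖ ^ 2 * (N0 + ‖h‖ ^ 2) +
            σ * ‖f * b‖ ^ 2 -
            2 * σ * ‖f‖ ^ 2 * (h * wstar * (starRingEnd ℂ) b).re) /
          (1 + ‖f‖ ^ 2) +
        2 * ((starRingEnd ℂ) f * (wstar * h - (σ : ℂ) * b)).re =
      1 + Real.log (1 + ‖f‖ ^ 2) + m * (1 + ‖f‖ ^ 2) +
        mt * ‖f * b‖ ^ 2 / (1 + ‖f‖ ^ 2) +
        2 * σ * m * ((starRingEnd ℂ) f * b).re := by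
  intro m mt wstar
  have hAr : (0:ℝ) < f.re ^ 2 + f.im ^ 2 := by
    have := Complex.normSq_pos.mpr hf
    rw [Complex.normSq_apply] at this; nlinarith
  have hD : (0:ℝ) < N0 + (h.re ^ 2 + h.im ^ 2) := by
    nlinarith [sq_nonneg h.re, sq_nonneg h.im]
  have h1A : (0:ℝ) < 1 + (f.re ^ 2 + f.im ^ 2) := by nlinarith
  have hAne := hAr.ne'
  have hDne := hD.ne'
  have h1Ane := h1A.ne'
  -- rewrite wstar with real coercions merged
  have hw : wstar = (starRingEnd ℂ) h *
      (((1 + (f.re ^ 2 + f.im ^ 2) : ℝ) : ℂ) + (σ : ℂ) * (starRingEnd ℂ) f * b) /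
      ((starRingEnd ℂ) f * ((N0 + (h.re ^ 2 + h.im ^ 2) : ℝ) : ℂ)) := by
    have kf : ((‖f‖ : ℂ)) ^ 2 = ((f.re ^ 2 + f.im ^ 2 : ℝ) : ℂ) := by
      rw [← Complex.ofReal_pow, Complex.sq_norm, Complex.normSq_apply]; push_cast; ring
    have kh : ((‖h‖ : ℂ)) ^ 2 = ((h.re ^ 2 + h.im ^ 2 : ℝ) : ℂ) := by
      rw [← Complex.ofReal_pow, Complex.sq_norm, Complex.normSq_apply]; push_cast; ring
    simp only [wstar, kf, kh]
    push_cast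
    ring
  have habsf : ‖f‖ ^ 2 = f.re ^ 2 + f.im ^ 2 := by
    rw [Complex.sq_norm, Complex.normSq_apply]; ring
  have habsh : ‖h‖ ^ 2 = h.re ^ 2 + h.im ^ 2 := by
    rw [Complex.sq_norm, Complex.normSq_apply]; ring
  have habsfb : ‖f * b‖ ^ 2 = (f.re ^ 2 + f.im ^ 2) * (b.re ^ 2 + b.im ^ 2) := by
    rw [Complex.sq_norm, Complex.normSq_mul, Complex.normSq_apply, Complex.normSq_apply]; ring
  have hnf : Complex.normSq f = f.re ^ 2 + f.im ^ 2 := by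
    rw [Complex.normSq_apply]; ring
  have hnh : Complex.normSq h = h.re ^ 2 + h.im ^ 2 := by
    rw [Complex.normSq_apply]; ring
  have hX : Complex.normSq (((1 + (f.re ^ 2 + f.im ^ 2) : ℝ) : ℂ)
        + (σ : ℂ) * (starRingEnd ℂ) f * b) =
      (1 + (f.re ^ 2 + f.im ^ 2)) ^ 2
        + σ ^ 2 * (f.re ^ 2 + f.im ^ 2) * (b.re ^ 2 + b.im ^ 2)
        + 2 * σ * (1 + (f.re ^ 2 + f.im ^ 2)) * (f.re * b.re + f.im * b.im) := by
    simp only [Complex.normSq_apply, Complex.add_re, Complex.add_im, Complex.mul_re,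
      Complex.mul_im, Complex.ofReal_re, Complex.ofReal_im, Complex.conj_re, Complex.conj_im]
    ring
  have e1 : ‖f * wstar‖ ^ 2 * (N0 + ‖h‖ ^ 2) =
      (h.re ^ 2 + h.im ^ 2) *
        ((1 + (f.re ^ 2 + f.im ^ 2)) ^ 2
          + σ ^ 2 * (f.re ^ 2 + f.im ^ 2) * (b.re ^ 2 + b.im ^ 2)
          + 2 * σ * (1 + (f.re ^ 2 + f.im ^ 2)) * (f.re * b.re + f.im * b.im)) /
        (N0 + (h.re ^ 2 + h.im ^ 2)) := by
    rw [habsh, Complex.sq_norm, hw, Complex.normSq_mul, Complex.normSq_div,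
      Complex.normSq_mul, Complex.normSq_mul, Complex.normSq_conj, Complex.normSq_conj,
      Complex.normSq_ofReal, hX, hnf, hnh]
    field_simp
  have e2 : (h * wstar * (starRingEnd ℂ) b).re =
      (h.re ^ 2 + h.im ^ 2) *
        ((1 + (f.re ^ 2 + f.im ^ 2)) * (f.re * b.re + f.im * b.im)
          + σ * (f.re ^ 2 + f.im ^ 2) * (b.re ^ 2 + b.im ^ 2)) /
        ((N0 + (h.re ^ 2 + h.im ^ 2)) * (f.re ^ 2 + f.im ^ 2)) := by
    rw [hw]
    simp only [Complex.normSq_mul, Complex.normSq_conj, Complex.normSq_ofReal, hnf,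
      Complex.mul_re, Complex.mul_im, Complex.div_re, Complex.div_im,
      Complex.add_re, Complex.add_im, Complex.ofReal_re, Complex.ofReal_im,
      Complex.conj_re, Complex.conj_im]
    field_simp
    ring
  have e3 : ((starRingEnd ℂ) f * (wstar * h - (σ : ℂ) * b)).re =
      (h.re ^ 2 + h.im ^ 2) *
        ((1 + (f.re ^ 2 + f.im ^ 2)) + σ * (f.re * b.re + f.im * b.im)) /
        (N0 + (h.re ^ 2 + h.im ^ 2)) - σ * (f.re * b.re + f.im * b.im) := by
    rw [hw]
    simp only [Complex.normSq_mul, Complex.normSq_conj, Complex.normSq_ofReal, hnf,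
      Complex.mul_re, Complex.mul_im, Complex.div_re, Complex.div_im,
      Complex.add_re, Complex.add_im, Complex.sub_re, Complex.sub_im,
      Complex.ofReal_re, Complex.ofReal_im, Complex.conj_re, Complex.conj_im]
    field_simp
    ring
  rw [e1, e2, e3, habsfb]
  simp only [m, mt, habsh, habsf, Complex.mul_re, Complex.conj_re, Complex.conj_im]
  field_simp
  ring
end

section
/- Let H : [−π,π] → ℂ be measurable, N0 > 0, and M(ω) = −N0/(N0+|H(ω)|²). Let G₀ : [−π,π] → ℝ be measurable with 1+G₀(ω) > 0 for almost every ω, and suppose that log(1+G₀), M·(1+G₀), and log(1+|H|²/N0) are integrable on [−π,π], and that (1/2π)∫_{−π}^{π} M(ω)·(1+G₀(ω)) dω = −1. Then (1/2π)∫_{−π}^{π} log(1+G₀(ω)) dω ≤ (1/2π)∫_{−π}^{π} log(1+|H(ω)|²/N0) dω. -/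
open Complex Real MeasureTheory

/-- Jensen step in the proof of Property 2: the Ungerboeck rate at a normalized
target response is at most the Shannon capacity of the ISI channel. -/
theorem stmt8 (H : ℝ → ℂ) (hHmeas : Measurable H) (N0 : ℝ) (hN0 : 0 < N0)
    (G0 : ℝ → ℝ) (hG0meas : Measurable G0)
    (hpos : ∀ᵐ ω ∂(volume.restrict (Set.Icc (-π) π)), 0 < 1 + G0 ω)
    (hint1 : IntegrableOn (fun ω => Real.log (1 + G0 ω)) (Set.Icc (-π) π))
    (hint2 : IntegrableOn
      (fun ω => (-N0 / (N0 + ‖H ω‖ ^ 2)) * (1 + G0 ω)) (Set.Icc (-π) π))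
    (hint3 : IntegrableOn
      (fun ω => Real.log (1 + ‖H ω‖ ^ 2 / N0)) (Set.Icc (-π) π))
    (hnorm : (1 / (2 * π)) *
        ∫ ω in (-π)..π, (-N0 / (N0 + ‖H ω‖ ^ 2)) * (1 + G0 ω) = -1) :
    (1 / (2 * π)) * ∫ ω in (-π)..π, Real.log (1 + G0 ω) ≤
      (1 / (2 * π)) * ∫ ω in (-π)..π, Real.log (1 + ‖H ω‖ ^ 2 / N0) := by
  have hle : (-π : ℝ) ≤ π := by linarith [Real.pi_pos]
  have hsub : Set.Ioc (-π) π ⊆ Set.Icc (-π) π := Set.Ioc_subset_Icc_self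
  -- rewrite interval integrals as set integrals over Ioc
  rw [intervalIntegral.integral_of_le hle] at hnorm ⊢
  rw [intervalIntegral.integral_of_le hle]
  set F : ℝ → ℝ := fun ω => (N0 / (N0 + ‖H ω‖ ^ 2)) * (1 + G0 ω) with hF
  have h2pi : (0:ℝ) < 2 * π := by linarith [Real.pi_pos]
  -- integral of F over Ioc equals 2π
  have hFneg : ∀ ω, (-N0 / (N0 + ‖H ω‖ ^ 2)) * (1 + G0 ω) = -F ω := by
    intro ω; simp [hF]; ring
  have hIF : ∫ ω in Set.Ioc (-π) π, F ω = 2 * π := by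
    have h1 : ∫ ω in Set.Ioc (-π) π, (-N0 / (N0 + ‖H ω‖ ^ 2)) * (1 + G0 ω)
        = -(2 * π) := by
      have h := hnorm
      rw [div_mul_eq_mul_div, one_mul, div_eq_iff (ne_of_gt h2pi)] at h
      linarith
    have h2 : ∫ ω in Set.Ioc (-π) π, (-N0 / (N0 + ‖H ω‖ ^ 2)) * (1 + G0 ω)
        = -∫ ω in Set.Ioc (-π) π, F ω := by
      simp_rw [hFneg]; exact integral_neg _
    linarith [h1, h2.symm]
  have hconst : IntegrableOn (fun _ : ℝ => (1:ℝ)) (Set.Ioc (-π) π) :=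
    integrableOn_const measure_Ioc_lt_top.ne
  -- integrability on Ioc
  have hi1 : IntegrableOn (fun ω => Real.log (1 + G0 ω)) (Set.Ioc (-π) π) :=
    hint1.mono_set hsub
  have hi2 : IntegrableOn F (Set.Ioc (-π) π) := by
    have h := (hint2.mono_set hsub).neg
    refine (IntegrableOn.congr_fun h ?_ measurableSet_Ioc)
    intro ω _; simp [hFneg ω]
  have hi3 : IntegrableOn (fun ω => Real.log (1 + ‖H ω‖ ^ 2 / N0))
      (Set.Ioc (-π) π) := hint3.mono_set hsub
  -- a.e. pointwise inequality
  have hposI : ∀ᵐ ω ∂(volume.restrict (Set.Ioc (-π) π)), 0 < 1 + G0 ω :=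
    ae_restrict_of_ae_restrict_of_subset hsub hpos
  have hkey : ∀ᵐ ω ∂(volume.restrict (Set.Ioc (-π) π)),
      Real.log (1 + G0 ω) ≤ Real.log (1 + ‖H ω‖ ^ 2 / N0) + (F ω - 1) := by
    filter_upwards [hposI] with ω hω
    have ha : (0:ℝ) ≤ ‖H ω‖ ^ 2 := sq_nonneg _
    have hden : 0 < N0 + ‖H ω‖ ^ 2 := by linarith
    have hFpos : 0 < F ω := by
      apply mul_pos _ hω
      exact div_pos hN0 hden
    have hprod : 1 + G0 ω = (1 + ‖H ω‖ ^ 2 / N0) * F ω := by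
      simp only [hF]
      field_simp
    have hbpos : 0 < 1 + ‖H ω‖ ^ 2 / N0 := by positivity
    rw [hprod, Real.log_mul (ne_of_gt hbpos) (ne_of_gt hFpos)]
    have := Real.log_le_sub_one_of_pos hFpos
    linarith
  -- integrate the inequality
  have hmono : ∫ ω in Set.Ioc (-π) π, Real.log (1 + G0 ω) ≤
      ∫ ω in Set.Ioc (-π) π,
        (Real.log (1 + ‖H ω‖ ^ 2 / N0) + (F ω - 1)) := by
    have hiG : IntegrableOn (fun ω => F ω - 1) (Set.Ioc (-π) π) := hi2.sub hconst
    exact integral_mono_ae hi1 (hi3.add hiG) hkey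
  have hsplit : ∫ ω in Set.Ioc (-π) π,
      (Real.log (1 + ‖H ω‖ ^ 2 / N0) + (F ω - 1)) =
      (∫ ω in Set.Ioc (-π) π, Real.log (1 + ‖H ω‖ ^ 2 / N0)) +
        ((∫ ω in Set.Ioc (-π) π, F ω) - ∫ ω in Set.Ioc (-π) π, (1:ℝ)) := by
    have hiG : IntegrableOn (fun ω => F ω - 1) (Set.Ioc (-π) π) := hi2.sub hconst
    rw [integral_add hi3 hiG, integral_sub hi2 hconst]
  have hone : ∫ ω in Set.Ioc (-π) π, (1:ℝ) = 2 * π := by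
    simp only [integral_const, smul_eq_mul, mul_one, Measure.restrict_apply_univ,
      Real.volume_Ioc]
    rw [measureReal_restrict_apply_univ, Real.volume_real_Ioc_of_le hle]
    ring
  rw [hsplit, hIF, hone] at hmono
  have : ∫ ω in Set.Ioc (-π) π, Real.log (1 + G0 ω) ≤
      ∫ ω in Set.Ioc (-π) π, Real.log (1 + ‖H ω‖ ^ 2 / N0) := by linarith
  have h2pi' : 0 ≤ 1 / (2 * π) := by positivity
  exact mul_le_mul_of_nonneg_left this h2pi'
end

section
/- Let w, h, f, b be complex numbers and N0 > 0 a real number, and assume |w|²·N0 = 1 and w·h = f + b. Then log(1+|f|²) − |f|² − (|f·w|²·(N0+|h|²) + |f·b|² − 2·|f|²·Re(h·w·conj(b)))/(1+|f|²) + 2·Re(conj(f)·(w·h − b)) = log(1+|f|²). -/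
open Complex Real

/-- Per-frequency computation behind Property 3: with an all-pass noise-whitening
prefilter value `w` (`|w|² N0 = 1`) and the decomposition `w·h = f + b`, the σ = 1
Forney-model MILB integrand reduces to `log(1+|f|²)`. -/
theorem stmt12 (w h f b : ℂ) (N0 : ℝ) (hN0 : 0 < N0)
    (hw : ‖w‖ ^ 2 * N0 = 1) (hdec : w * h = f + b) :
    Real.log (1 + ‖f‖ ^ 2) - ‖f‖ ^ 2 -
        (‖f * w‖ ^ 2 * (N0 + ‖h‖ ^ 2) +
            ‖f * b‖ ^ 2 -
            2 * ‖f‖ ^ 2 * (h * w * (starRingEnd ℂ) b).re) /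
          (1 + ‖f‖ ^ 2) +
        2 * ((starRingEnd ℂ) f * (w * h - b)).re =
      Real.log (1 + ‖f‖ ^ 2) := by
  have hf : (0:ℝ) < 1 + ‖f‖ ^ 2 := by positivity
  have hlast : ((starRingEnd ℂ) f * (w * h - b)).re = ‖f‖ ^ 2 := by
    rw [hdec]
    simp [Complex.sq_norm, Complex.normSq_apply, Complex.mul_re]
  have hfrac :
      (‖f * w‖ ^ 2 * (N0 + ‖h‖ ^ 2) +
          ‖f * b‖ ^ 2 -
          2 * ‖f‖ ^ 2 * (h * w * (starRingEnd ℂ) b).re) /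
        (1 + ‖f‖ ^ 2) = ‖f‖ ^ 2 := by
    rw [div_eq_iff (ne_of_gt hf)]
    have h1 : ‖f * w‖ ^ 2 * N0 = ‖f‖ ^ 2 := by
      rw [norm_mul, mul_pow, mul_assoc, hw, mul_one]
    have h2 : ‖f * w‖ ^ 2 * ‖h‖ ^ 2 =
        ‖f‖ ^ 2 * ‖f + b‖ ^ 2 := by
      rw [norm_mul, mul_pow, mul_assoc, ← mul_pow, ← norm_mul, hdec]
    have h3 : (h * w * (starRingEnd ℂ) b).re = ((f + b) * (starRingEnd ℂ) b).re := by
      rw [mul_comm h w, hdec]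
    rw [mul_add, h1, h2, h3]
    simp only [Complex.sq_norm, Complex.normSq_apply, Complex.mul_re, Complex.add_re,
      Complex.add_im, Complex.mul_im, Complex.conj_re, Complex.conj_im]
    ring
  rw [hlast, hfrac]
  ring
end
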